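/- arXiv:2412.03919 — 2 statements merged into one kernel-verified Lean document; each statement's English description precedes it below -/
import Mathlib

section
/- Let n be a positive integer, P a real n×n positive definite matrix, M a real n×n matrix, and λ, π positive real numbers. Then λ·P − (1+π)·Mᵀ·P·M is positive semidefinite if and only if λ·P⁻¹ − (1+π)·M·P⁻¹·Mᵀ is positive semidefinite. -/
open Matrix

private lemma psd_smul {n : ℕ} {X : Matrix (Fin n) (Fin n) ℝ} (hX : X.PosSemidef)
    {c : ℝ} (hc : 0 ≤ c) : (c • X).PosSemidef := by
  exact hX.smul hc

private lemma posdef_smul {n : ℕ} {X : Matrix (Fin n) (Fin n) ℝ} (hX : X.PosDef)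
    {c : ℝ} (hc : 0 < c) : (c • X).PosDef := by
  exact hX.smul hc

/-- One direction of the Schur-complement equivalence. -/
private lemma aux {n : ℕ} (P M : Matrix (Fin n) (Fin n) ℝ) (hP : P.PosDef)
    (lam π : ℝ) (hlam : 0 < lam) (hπ : 0 < π)
    (h : (lam • P - (1 + π) • (Mᵀ * P * M)).PosSemidef) :
    (lam • P⁻¹ - (1 + π) • (M * P⁻¹ * Mᵀ)).PosSemidef := by
  haveI : Invertible P := hP.isUnit.invertible
  have hPd : IsUnit P.det := (isUnit_iff_isUnit_det P).1 hP.isUnit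
  have hPl : (lam • P).PosDef := posdef_smul hP hlam
  haveI : Invertible (lam • P) := hPl.isUnit.invertible
  have hπ1 : (0:ℝ) ≤ 1 + π := by linarith
  set c : ℝ := Real.sqrt (1 + π) with hc
  have hc2 : c * c = 1 + π := Real.mul_self_sqrt hπ1
  set B : Matrix (Fin n) (Fin n) ℝ := c • (Mᵀ * P) with hB
  have hPt : Pᵀ = P := hP.1
  have hPit : (P⁻¹)ᵀ = P⁻¹ := hP.1.inv
  have hBH : Bᴴ = c • (P * M) := by
    rw [hB, conjTranspose_smul, star_trivial, conjTranspose_eq_transpose_of_trivial,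
      Matrix.transpose_mul, Matrix.transpose_transpose, hPt]
  -- block matrix
  have h22 : (fromBlocks (lam • P) B Bᴴ P).PosSemidef := by
    rw [PosDef.fromBlocks₂₂ _ _ hP]
    refine (congrArg Matrix.PosSemidef ?_).mpr h
    congr 1
    rw [hBH, hB]
    rw [Matrix.smul_mul, Matrix.mul_smul, Matrix.smul_mul, smul_smul, hc2]
    congr 1
    rw [show Mᵀ * P * P⁻¹ * (P * M) = Mᵀ * (P * P⁻¹) * (P * M) by noncomm_ring]
    rw [Matrix.mul_nonsing_inv _ hPd]
    noncomm_ring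
  have h11 := (PosDef.fromBlocks₁₁ B P hPl).1 h22
  -- compute the other Schur complement
  have hinv : (lam • P)⁻¹ = lam⁻¹ • P⁻¹ := by
    refine Matrix.inv_eq_left_inv ?_
    rw [Matrix.smul_mul, Matrix.mul_smul, smul_smul, Matrix.nonsing_inv_mul _ hPd,
      inv_mul_cancel₀ hlam.ne', one_smul]
  have hX : (P - ((1 + π) / lam) • (P * M * P⁻¹ * Mᵀ * P)).PosSemidef := by
    refine (congrArg Matrix.PosSemidef ?_).mpr h11
    congr 1
    rw [hBH, hB, hinv]
    simp only [Matrix.smul_mul, Matrix.mul_smul, smul_smul]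
    rw [show P * M * P⁻¹ * (Mᵀ * P) = P * M * P⁻¹ * Mᵀ * P from by noncomm_ring]
    congr 1
    field_simp [← hc2]
    rw [sq, hc2]
  -- congruence by P⁻¹
  have hcong := hX.mul_mul_conjTranspose_same P⁻¹
  have hfin := psd_smul hcong hlam.le
  have key : lam • (P⁻¹ * (P - ((1 + π) / lam) • (P * M * P⁻¹ * Mᵀ * P)) * (P⁻¹)ᴴ)
      = lam • P⁻¹ - (1 + π) • (M * P⁻¹ * Mᵀ) := by
    have hH : (P⁻¹)ᴴ = P⁻¹ := by
      rw [conjTranspose_eq_transpose_of_trivial, hPit]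
    rw [hH, Matrix.mul_sub, Matrix.sub_mul]
    rw [Matrix.mul_smul, Matrix.smul_mul]
    have e1 : P⁻¹ * P * P⁻¹ = P⁻¹ := by
      rw [Matrix.nonsing_inv_mul _ hPd, Matrix.one_mul]
    have e2 : P⁻¹ * (P * M * P⁻¹ * Mᵀ * P) * P⁻¹ = M * P⁻¹ * Mᵀ := by
      rw [show P⁻¹ * (P * M * P⁻¹ * Mᵀ * P) * P⁻¹
          = (P⁻¹ * P) * (M * P⁻¹ * Mᵀ) * (P * P⁻¹) by noncomm_ring]
      rw [Matrix.nonsing_inv_mul _ hPd, Matrix.mul_nonsing_inv _ hPd,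
        Matrix.one_mul, Matrix.mul_one]
    rw [e1, e2, smul_sub, smul_smul]
    rw [show lam * ((1 + π) / lam) = 1 + π by field_simp]
  rw [key] at hfin
  exact hfin

/-- Schur-complement equivalence: for positive definite `P`,
`λP - (1+π) Mᵀ P M ⪰ 0 ↔ λP⁻¹ - (1+π) M P⁻¹ Mᵀ ⪰ 0`. -/
theorem lyapunov_inverse_equiv
    (n : ℕ) (hn : 0 < n)
    (P : Matrix (Fin n) (Fin n) ℝ) (hP : P.PosDef)
    (M : Matrix (Fin n) (Fin n) ℝ) (lam π : ℝ) (hlam : 0 < lam) (hπ : 0 < π) :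
    (lam • P - (1 + π) • (Mᵀ * P * M)).PosSemidef ↔
      (lam • P⁻¹ - (1 + π) • (M * P⁻¹ * Mᵀ)).PosSemidef := by
  constructor
  · exact aux P M hP lam π hlam hπ
  · intro h
    have h' := aux P⁻¹ Mᵀ hP.inv lam π hlam hπ (by
      rwa [Matrix.transpose_transpose])
    rwa [Matrix.nonsing_inv_nonsing_inv _ ((isUnit_iff_isUnit_det P).1 hP.isUnit),
      Matrix.transpose_transpose] at h'
end

section
/- Let n, N, N̂, m, T be positive integers and δ ≥ 0, π > 0, α > 0, λ ∈ (0,1] real numbers. Let A (n×N), B (n×N̂) be real matrices, and let R₀T (N×T), G₀T (N̂×T), U₀T (m×T), W₀T (n×T), X₁T (n×T) be real matrices with X₁T = A·R₀T + B·G₀T + W₀T and every column w of W₀T satisfying wᵀw ≤ δ. Fix x ∈ ℝⁿ, a real N×n matrix L, a real N̂×m matrix Gx, a real n×n positive definite matrix P, and a real T×n matrix H with R₀T·H = L·P⁻¹. Set R̃ := [R₀T; Gx·U₀T] (an (N+N̂)×T matrix, vertical stacking) and R̂ := [R₀T; G₀T]. Assume the block matrix [[−λP⁻¹, 0, 0],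 [0, 0, R̃·H], [0, (R̃·H)ᵀ, −(1+π)⁻¹P⁻¹]] − α·[[X₁T·X₁Tᵀ − TδIₙ, −X₁T·R̂ᵀ, 0], [−R̂·X₁Tᵀ, R̂·R̂ᵀ, 0], [0, 0, 0]] is negative semidefinite. Define u := (U₀T·H·P)·x. Then for every w ∈ ℝⁿ with wᵀw ≤ δ, the vector x⁺ := A·(L·x) + B·(Gx·u) + w satisfies (x⁺)ᵀP x⁺ ≤ λ·xᵀPx + (1 + 1/π)·‖√P‖²·wᵀw, where √P is the positive semidefinite square root of P and ‖√P‖ its ℓ²→ℓ² operator norm. -/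
set_option maxHeartbeats 1000000


open Matrix

/-- A real matrix is negative semidefinite if it is symmetric and
`vᵀ M v ≤ 0` for all real vectors `v`. -/
def Matrix.NegSemidef {k : Type*} [Fintype k] (M : Matrix k k ℝ) : Prop :=
  M.IsSymm ∧ ∀ v : k → ℝ, v ⬝ᵥ M.mulVec v ≤ 0

/-- The `ℓ² → ℓ²` operator norm of a real square matrix. -/
noncomputable def l2OpNorm {n : ℕ} (M : Matrix (Fin n) (Fin n) ℝ) : ℝ :=
  ‖Matrix.toEuclideanCLM (𝕜 := ℝ) M‖

private lemma dot_self_nonneg {k : Type*} [Fintype k] (v : k → ℝ) : 0 ≤ v ⬝ᵥ v :=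
  Finset.sum_nonneg fun i _ => mul_self_nonneg _

private lemma dotT {a b : Type*} [Fintype a] [Fintype b] (C : Matrix a b ℝ)
    (v : a → ℝ) (w : b → ℝ) : (Cᵀ.mulVec v) ⬝ᵥ w = v ⬝ᵥ C.mulVec w := by
  rw [Matrix.mulVec_transpose, ← Matrix.dotProduct_mulVec]

private lemma dotT' {a b : Type*} [Fintype a] [Fintype b] (C : Matrix a b ℝ)
    (v : b → ℝ) (w : a → ℝ) : v ⬝ᵥ Cᵀ.mulVec w = w ⬝ᵥ C.mulVec v := by
  rw [dotProduct_comm, dotT]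

private lemma mulVec_dot_le {n : ℕ} (S : Matrix (Fin n) (Fin n) ℝ) (v : Fin n → ℝ) :
    (S.mulVec v) ⬝ᵥ (S.mulVec v) ≤ l2OpNorm S ^ 2 * (v ⬝ᵥ v) := by
  have key : ∀ u : Fin n → ℝ, ‖(WithLp.equiv 2 (Fin n → ℝ)).symm u‖ ^ 2 = u ⬝ᵥ u := by
    intro u
    rw [EuclideanSpace.norm_eq, Real.sq_sqrt (by positivity)]
    simp [dotProduct, sq]
  have h := (Matrix.toEuclideanCLM (𝕜 := ℝ) S).le_opNorm
      ((WithLp.equiv 2 (Fin n → ℝ)).symm v)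
  change ‖(WithLp.equiv 2 (Fin n → ℝ)).symm (S *ᵥ v)‖ ≤ _ at h
  have h2 := pow_le_pow_left₀ (norm_nonneg _) h 2
  rw [mul_pow, key, key] at h2
  exact h2

/-- Core decrease implication of Theorem 2 (data-driven R-CBC and R-SC), pointwise at a
fixed state `x`: under the data-dependent LMI and `R₀T H = L P⁻¹`, the controller
`u = U₀T H P x` yields `B(x⁺) ≤ λ B(x) + (1 + 1/π) ‖√P‖² wᵀw` for all `w` with `wᵀw ≤ δ`,
where `B(x) = xᵀ P x` and `x⁺ = A (L x) + B (Gx u) + w`. -/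
theorem data_driven_decrease
    (n N Nh m T : ℕ) (hn : 0 < n) (hN : 0 < N) (hNh : 0 < Nh) (hm : 0 < m) (hT : 0 < T)
    (δ π α lam : ℝ) (hδ : 0 ≤ δ) (hπ : 0 < π) (hα : 0 < α)
    (hlam₀ : 0 < lam) (hlam₁ : lam ≤ 1)
    (A : Matrix (Fin n) (Fin N) ℝ) (B : Matrix (Fin n) (Fin Nh) ℝ)
    (R₀T : Matrix (Fin N) (Fin T) ℝ) (G₀T : Matrix (Fin Nh) (Fin T) ℝ)
    (U₀T : Matrix (Fin m) (Fin T) ℝ) (W₀T X₁T : Matrix (Fin n) (Fin T) ℝ)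
    (hdata : X₁T = A * R₀T + B * G₀T + W₀T)
    (hW : ∀ k : Fin T, (fun i => W₀T i k) ⬝ᵥ (fun i => W₀T i k) ≤ δ)
    (x : Fin n → ℝ)
    (L : Matrix (Fin N) (Fin n) ℝ) (Gx : Matrix (Fin Nh) (Fin m) ℝ)
    (P : Matrix (Fin n) (Fin n) ℝ) (hP : P.PosDef)
    (H : Matrix (Fin T) (Fin n) ℝ) (hH : R₀T * H = L * P⁻¹)
    (Rt : Matrix (Fin N ⊕ Fin Nh) (Fin T) ℝ) (hRt : Rt = fromRows R₀T (Gx * U₀T))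
    (Rh : Matrix (Fin N ⊕ Fin Nh) (Fin T) ℝ) (hRh : Rh = fromRows R₀T G₀T)
    (hLMI : Matrix.NegSemidef
      (fromBlocks (-(lam • P⁻¹))
          (fromCols (0 : Matrix (Fin n) (Fin N ⊕ Fin Nh) ℝ)
            (0 : Matrix (Fin n) (Fin n) ℝ))
          (fromRows (0 : Matrix (Fin N ⊕ Fin Nh) (Fin n) ℝ)
            (0 : Matrix (Fin n) (Fin n) ℝ))
          (fromBlocks (0 : Matrix (Fin N ⊕ Fin Nh) (Fin N ⊕ Fin Nh) ℝ)
            (Rt * H) (Rt * H)ᵀ (-((1 + π)⁻¹ • P⁻¹)))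
        - α •
        fromBlocks (X₁T * X₁Tᵀ - ((T : ℝ) * δ) • (1 : Matrix (Fin n) (Fin n) ℝ))
          (fromCols (-(X₁T * Rhᵀ)) (0 : Matrix (Fin n) (Fin n) ℝ))
          (fromRows (-(Rh * X₁Tᵀ)) (0 : Matrix (Fin n) (Fin n) ℝ))
          (fromBlocks (Rh * Rhᵀ) (0 : Matrix (Fin N ⊕ Fin Nh) (Fin n) ℝ)
            (0 : Matrix (Fin n) (Fin N ⊕ Fin Nh) ℝ) (0 : Matrix (Fin n) (Fin n) ℝ))))
    (u : Fin m → ℝ) (hu : u = (U₀T * H * P).mulVec x) :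
    ∀ w : Fin n → ℝ, w ⬝ᵥ w ≤ δ →
      (A.mulVec (L.mulVec x) + B.mulVec (Gx.mulVec u) + w) ⬝ᵥ
          P.mulVec (A.mulVec (L.mulVec x) + B.mulVec (Gx.mulVec u) + w)
        ≤ lam * (x ⬝ᵥ P.mulVec x)
          + (1 + 1 / π) * l2OpNorm (open scoped MatrixOrder in CFC.sqrt P) ^ 2 * (w ⬝ᵥ w) := by
  
  intro w hw
  have hdet : IsUnit P.det := isUnit_iff_ne_zero.mpr hP.det_pos.ne'
  have hPT : Pᵀ = P := by
    have h := hP.1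
    ext i j
    simpa using congrFun (congrFun h i) j
  have hpsd : ∀ v : Fin n → ℝ, 0 ≤ v ⬝ᵥ P.mulVec v := by
    intro v
    simpa using hP.posSemidef.dotProduct_mulVec_nonneg v
  have hPsymm : ∀ v w : Fin n → ℝ, v ⬝ᵥ P.mulVec w = w ⬝ᵥ P.mulVec v := by
    intro v w
    conv_lhs => rw [← hPT]
    exact dotT' P v w
  -- the key bilinear inequality from the LMI
  have key : ∀ s t : Fin n → ℝ,
      2 * ((P.mulVec s) ⬝ᵥ
          (A.mulVec (L.mulVec t) + B.mulVec (Gx.mulVec ((U₀T * H * P).mulVec t))))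
        ≤ lam * (s ⬝ᵥ P.mulVec s) + (1 + π)⁻¹ * (t ⬝ᵥ P.mulVec t) := by
    intro s t
    set ξ : Fin n → ℝ := P.mulVec s with hξ
    set ζ : Fin n → ℝ := P.mulVec t with hζ
    set η : Fin N ⊕ Fin Nh → ℝ := Sum.elim (Aᵀ.mulVec ξ) (Bᵀ.mulVec ξ) with hη
    have h := hLMI.2 (Sum.elim ξ (Sum.elim η ζ))
    simp only [Matrix.sub_mulVec, dotProduct_sub, Matrix.smul_mulVec,
      dotProduct_smul, fromBlocks_mulVec, fromRows_mulVec, fromCols_mulVec_sumElim,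
      sumElim_dotProduct_sumElim, Matrix.zero_mulVec, Matrix.neg_mulVec,
      dotProduct_add, dotProduct_neg, add_zero, zero_add, dotProduct_zero,
      smul_eq_mul, Sum.elim_comp_inl, Sum.elim_comp_inr, Matrix.one_mulVec] at h
    -- individual term computations
    have e1 : ξ ⬝ᵥ P⁻¹.mulVec ξ = s ⬝ᵥ P.mulVec s := by
      rw [hξ, Matrix.mulVec_mulVec, Matrix.nonsing_inv_mul P hdet, Matrix.one_mulVec,
        dotProduct_comm]
    have e4 : ζ ⬝ᵥ P⁻¹.mulVec ζ = t ⬝ᵥ P.mulVec t := by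
      rw [hζ, Matrix.mulVec_mulVec, Matrix.nonsing_inv_mul P hdet, Matrix.one_mulVec,
        dotProduct_comm]
    have e2 : η ⬝ᵥ (Rt * H).mulVec ζ
        = ξ ⬝ᵥ (A.mulVec (L.mulVec t) + B.mulVec (Gx.mulVec ((U₀T * H * P).mulVec t))) := by
      rw [hRt, Matrix.fromRows_mul, Matrix.fromRows_mulVec, hη,
        sumElim_dotProduct_sumElim, dotT, dotT, hH, hζ, dotProduct_add]
      congr 1
      · congr 1
        rw [Matrix.mulVec_mulVec, Matrix.mulVec_mulVec, Matrix.mul_assoc,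
          Matrix.nonsing_inv_mul_cancel_right P L hdet, Matrix.mulVec_mulVec]
      · congr 1
        simp only [Matrix.mulVec_mulVec, Matrix.mul_assoc]
    have e3 : ζ ⬝ᵥ (Rt * H)ᵀ.mulVec η = η ⬝ᵥ (Rt * H).mulVec ζ := dotT' _ _ _
    -- the data part
    have e5 : ξ ⬝ᵥ (X₁T * X₁Tᵀ).mulVec ξ - ξ ⬝ᵥ (X₁T * Rhᵀ).mulVec η
        - η ⬝ᵥ (Rh * X₁Tᵀ).mulVec ξ + η ⬝ᵥ (Rh * Rhᵀ).mulVec η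
        = (W₀Tᵀ.mulVec ξ) ⬝ᵥ (W₀Tᵀ.mulVec ξ) := by
      have hq : Rhᵀ.mulVec η = X₁Tᵀ.mulVec ξ - W₀Tᵀ.mulVec ξ := by
        rw [hRh, Matrix.transpose_fromRows, hη, Matrix.fromCols_mulVec_sumElim, hdata]
        simp only [Matrix.transpose_add, Matrix.transpose_mul, Matrix.add_mulVec,
          Matrix.mulVec_mulVec]
        abel
      have k1 : ξ ⬝ᵥ (X₁T * X₁Tᵀ).mulVec ξ = (X₁Tᵀ.mulVec ξ) ⬝ᵥ (X₁Tᵀ.mulVec ξ) := by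
        rw [← Matrix.mulVec_mulVec, dotT]
      have k2 : ξ ⬝ᵥ (X₁T * Rhᵀ).mulVec η = (X₁Tᵀ.mulVec ξ) ⬝ᵥ (Rhᵀ.mulVec η) := by
        rw [← Matrix.mulVec_mulVec, dotT]
      have k3 : η ⬝ᵥ (Rh * X₁Tᵀ).mulVec ξ = (Rhᵀ.mulVec η) ⬝ᵥ (X₁Tᵀ.mulVec ξ) := by
        rw [← Matrix.mulVec_mulVec, ← Matrix.transpose_transpose Rh, dotT, Matrix.transpose_transpose]
      have k4 : η ⬝ᵥ (Rh * Rhᵀ).mulVec η = (Rhᵀ.mulVec η) ⬝ᵥ (Rhᵀ.mulVec η) := by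
        rw [← Matrix.mulVec_mulVec, ← Matrix.transpose_transpose Rh, dotT, Matrix.transpose_transpose]
      rw [k1, k2, k3, k4, hq]
      simp only [dotProduct_sub, sub_dotProduct]
      ring
    have e6 : (W₀Tᵀ.mulVec ξ) ⬝ᵥ (W₀Tᵀ.mulVec ξ) ≤ (T : ℝ) * δ * (ξ ⬝ᵥ ξ) := by
      have hξξ : 0 ≤ ξ ⬝ᵥ ξ := dot_self_nonneg ξ
      calc (W₀Tᵀ.mulVec ξ) ⬝ᵥ (W₀Tᵀ.mulVec ξ)
          = ∑ k : Fin T, (∑ i : Fin n, W₀T i k * ξ i) ^ 2 := by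
            simp [dotProduct, Matrix.mulVec, Matrix.transpose_apply, sq]
        _ ≤ ∑ k : Fin T, δ * (ξ ⬝ᵥ ξ) := by
            refine Finset.sum_le_sum fun k _ => ?_
            calc (∑ i : Fin n, W₀T i k * ξ i) ^ 2
                ≤ (∑ i : Fin n, (W₀T i k) ^ 2) * (∑ i : Fin n, (ξ i) ^ 2) :=
                  Finset.sum_mul_sq_le_sq_mul_sq _ _ _
              _ ≤ δ * (ξ ⬝ᵥ ξ) := by
                  refine mul_le_mul ?_ ?_ (by positivity) hδ
                  · simpa [dotProduct, sq] using hW k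
                  · simp [dotProduct, sq]
        _ = (T : ℝ) * δ * (ξ ⬝ᵥ ξ) := by
            simp [Finset.sum_const, mul_assoc]
    -- combine
    rw [e1, e2, e3, e2, e4] at h
    have hq2 : ξ ⬝ᵥ (X₁T * X₁Tᵀ).mulVec ξ - (T : ℝ) * δ * (ξ ⬝ᵥ ξ)
        + -(ξ ⬝ᵥ (X₁T * Rhᵀ).mulVec η)
        + (-(η ⬝ᵥ (Rh * X₁Tᵀ).mulVec ξ) + η ⬝ᵥ (Rh * Rhᵀ).mulVec η) ≤ 0 := by
      linarith [e5, e6, dot_self_nonneg ξ]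
    linarith [h, mul_nonpos_of_nonneg_of_nonpos hα.le hq2]
  · -- main combination
    rw [hu]
    set ax : Fin n → ℝ :=
      A.mulVec (L.mulVec x) + B.mulVec (Gx.mulVec ((U₀T * H * P).mulVec x)) with hax
    set Y : ℝ := ax ⬝ᵥ P.mulVec ax with hY
    set β : ℝ := x ⬝ᵥ P.mulVec x with hβ
    set C : ℝ := ax ⬝ᵥ P.mulVec w with hC
    set Wp : ℝ := w ⬝ᵥ P.mulVec w with hWp
    have hYβ : (1 + π) * Y ≤ lam * β := by
      have h := key (lam⁻¹ • ax) x
      rw [Matrix.mulVec_smul, smul_dotProduct, dotProduct_smul, smul_dotProduct,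
        smul_eq_mul, smul_eq_mul, smul_eq_mul, dotProduct_comm (P.mulVec ax) ax,
        ← hY, ← hβ] at h
      have hself : lam * (lam⁻¹ * (lam⁻¹ * Y)) = lam⁻¹ * Y := by
        rw [show lam * (lam⁻¹ * (lam⁻¹ * Y)) = (lam * lam⁻¹) * (lam⁻¹ * Y) by ring,
          mul_inv_cancel₀ hlam₀.ne', one_mul]
      rw [hself] at h
      have h2 : lam⁻¹ * Y ≤ (1 + π)⁻¹ * β := by linarith
      have h3 := mul_le_mul_of_nonneg_left h2
        (mul_nonneg hlam₀.le (show (0:ℝ) ≤ 1 + π by linarith))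
      have e1 : lam * (1 + π) * (lam⁻¹ * Y) = (1 + π) * Y := by
        rw [show lam * (1 + π) * (lam⁻¹ * Y) = (lam * lam⁻¹) * ((1 + π) * Y) by ring,
          mul_inv_cancel₀ hlam₀.ne', one_mul]
      have e2 : lam * (1 + π) * ((1 + π)⁻¹ * β) = lam * β := by
        rw [show lam * (1 + π) * ((1 + π)⁻¹ * β) = ((1 + π) * (1 + π)⁻¹) * (lam * β) by ring,
          mul_inv_cancel₀ (show (1 : ℝ) + π ≠ 0 by linarith), one_mul]
      rw [e1, e2] at h3
      exact h3
    have hyoung : 2 * C ≤ π * Y + π⁻¹ * Wp := by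
      have h0 : 0 ≤ (ax - π⁻¹ • w) ⬝ᵥ P.mulVec (ax - π⁻¹ • w) := hpsd _
      have hexp : (ax - π⁻¹ • w) ⬝ᵥ P.mulVec (ax - π⁻¹ • w)
          = Y - 2 * π⁻¹ * C + π⁻¹ * π⁻¹ * Wp := by
        rw [Matrix.mulVec_sub, Matrix.mulVec_smul]
        simp only [dotProduct_sub, sub_dotProduct, dotProduct_smul, smul_dotProduct,
          smul_eq_mul]
        rw [hPsymm w ax]
        ring
      rw [hexp] at h0
      have hmul := mul_nonneg hπ.le h0
      have e8 : π * (2 * π⁻¹ * C) = 2 * C := by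
        field_simp
      have e9 : π * (π⁻¹ * π⁻¹ * Wp) = π⁻¹ * Wp := by
        field_simp
      nlinarith [hmul, e8, e9]
    have hWple : Wp ≤ l2OpNorm (open scoped MatrixOrder in CFC.sqrt P) ^ 2 * (w ⬝ᵥ w) := by
      set S := (open scoped MatrixOrder in CFC.sqrt P) with hS
      have hSS : S * S = P := by
        open scoped MatrixOrder in exact CFC.sqrt_mul_sqrt_self P hP.posSemidef.nonneg
      have hST : Sᵀ = S := by
        have h := (open scoped MatrixOrder in
          (Matrix.nonneg_iff_posSemidef.mp (CFC.sqrt_nonneg P))).1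
        ext i j
        simpa using congrFun (congrFun h i) j
      have : Wp = (S.mulVec w) ⬝ᵥ (S.mulVec w) := by
        rw [hWp, ← hSS, ← Matrix.mulVec_mulVec, ← dotT S, hST]
      rw [this]
      exact mulVec_dot_le S w
    have hπinv : 0 ≤ 1 + 1 / π := by positivity
    have hgoal : (ax + w) ⬝ᵥ P.mulVec (ax + w) = Y + 2 * C + Wp := by
      rw [Matrix.mulVec_add]
      simp only [dotProduct_add, add_dotProduct]
      rw [hPsymm w ax]
      ring
    calc (ax + w) ⬝ᵥ P.mulVec (ax + w) = Y + 2 * C + Wp := hgoal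
      _ ≤ lam * β + (1 + π⁻¹) * Wp := by nlinarith [hYβ, hyoung]
      _ ≤ lam * β + (1 + π⁻¹) * (l2OpNorm (open scoped MatrixOrder in CFC.sqrt P) ^ 2 * (w ⬝ᵥ w)) := by
          nlinarith [mul_le_mul_of_nonneg_left hWple
            (show (0:ℝ) ≤ 1 + π⁻¹ by positivity)]
      _ = lam * (x ⬝ᵥ P.mulVec x)
          + (1 + 1/π) * l2OpNorm (open scoped MatrixOrder in CFC.sqrt P) ^ 2 * (w ⬝ᵥ w) := by
          rw [hβ, one_div]; ring
end
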